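/- Let F be a finite field with |F| ≥ 2n+1 where 3 divides n. Then there exist 2n distinct elements λ₀,λ₁,…,λ_{2n−1} of F such that for every i with 0 ≤ i ≤ n/3−1, (λ_{6i+1}−λ_{6i+3})(λ_{6i+1}−λ_{6i+5})(λ_{6i+2}−λ_{6i})(λ_{6i+2}−λ_{6i+4}) ≠ (λ_{6i+2}−λ_{6i+3})(λ_{6i+2}−λ_{6i+5})(λ_{6i+1}−λ_{6i})(λ_{6i+1}−λ_{6i+4}). -/
import Mathlib

private lemma fresh {F : Type*} [Field F] [Fintype F] (t : Finset F)
    (ht : t.card < Fintype.card F) : ∃ x : F, x ∉ t := by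
  by_contra h
  push_neg at h
  have : t = Finset.univ := Finset.eq_univ_iff_forall.mpr h
  rw [this, Finset.card_univ] at ht
  exact lt_irrefl _ ht

private lemma key {F : Type*} [Field F] [Fintype F] (s : Finset F)
    (hs : s.card + 7 ≤ Fintype.card F) :
    ∃ e a b c f d : F,
      e ∉ s ∧ a ∉ s ∧ b ∉ s ∧ c ∉ s ∧ f ∉ s ∧ d ∉ s ∧
      e ≠ a ∧ e ≠ b ∧ e ≠ c ∧ e ≠ f ∧ e ≠ d ∧
      a ≠ b ∧ a ≠ c ∧ a ≠ f ∧ a ≠ d ∧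
      b ≠ c ∧ b ≠ f ∧ b ≠ d ∧ c ≠ f ∧ c ≠ d ∧ f ≠ d ∧
      (a - c) * (a - d) * ((b - e) * (b - f)) ≠
        (b - c) * (b - d) * ((a - e) * (a - f)) := by
  classical
  obtain ⟨c, hc⟩ := fresh s (by omega)
  obtain ⟨d, hd⟩ := fresh (insert c s) (by
    have h2 := Finset.card_insert_le c s; omega)
  obtain ⟨e, he⟩ := fresh (insert d (insert c s)) (by
    have h1 := Finset.card_insert_le d (insert c s)
    have h2 := Finset.card_insert_le c s
    omega)
  obtain ⟨f, hf⟩ := fresh (insert e (insert d (insert c s))) (by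
    have h1 := Finset.card_insert_le e (insert d (insert c s))
    have h2 := Finset.card_insert_le d (insert c s)
    have h3 := Finset.card_insert_le c s
    omega)
  set a₀ : F := (e * f - c * d) / (e + f - c - d) with ha₀
  obtain ⟨a, ha⟩ := fresh (insert a₀ (insert f (insert e (insert d (insert c s))))) (by
    have h1 := Finset.card_insert_le a₀ (insert f (insert e (insert d (insert c s))))
    have h2 := Finset.card_insert_le f (insert e (insert d (insert c s)))
    have h3 := Finset.card_insert_le e (insert d (insert c s))
    have h4 := Finset.card_insert_le d (insert c s)
    have h5 := Finset.card_insert_le c s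
    omega)
  simp only [Finset.mem_insert, not_or] at hd he hf ha
  obtain ⟨hdc, hds⟩ := hd
  obtain ⟨hed, hec, hes⟩ := he
  obtain ⟨hfe, hfd, hfc, hfs⟩ := hf
  obtain ⟨haa0, haf, hae, had, hac, has⟩ := ha
  set L : F := (a - c) * (a - d) - (a - e) * (a - f) with hL
  have hLne : L ≠ 0 := by
    intro h0
    have hexp : (e + f - c - d) * a + (c * d - e * f) = 0 := by
      rw [hL] at h0; linear_combination h0
    by_cases hu : e + f - c - d = 0
    · have hcd : c * d - e * f = 0 := by linear_combination hexp - a * hu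
      have hz : (e - c) * (e - d) = 0 := by linear_combination hcd + e * hu
      rcases mul_eq_zero.mp hz with h | h
      · exact hec (sub_eq_zero.mp h)
      · exact hed (sub_eq_zero.mp h)
    · apply haa0
      rw [ha₀, eq_div_iff hu]
      linear_combination hexp
  set B : F := -(a - c) * (a - d) * (e + f) + (a - e) * (a - f) * (c + d) with hB
  set b₀ : F := -a - B / L with hb₀
  obtain ⟨b, hb⟩ := fresh (insert b₀ (insert a (insert f (insert e (insert d (insert c s)))))) (by
    have h1 := Finset.card_insert_le b₀ (insert a (insert f (insert e (insert d (insert c s)))))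
    have h2 := Finset.card_insert_le a (insert f (insert e (insert d (insert c s))))
    have h3 := Finset.card_insert_le f (insert e (insert d (insert c s)))
    have h4 := Finset.card_insert_le e (insert d (insert c s))
    have h5 := Finset.card_insert_le c s
    have h6 := Finset.card_insert_le d (insert c s)
    omega)
  simp only [Finset.mem_insert, not_or] at hb
  obtain ⟨hbb0, hba, hbf, hbe, hbd, hbc, hbs⟩ := hb
  refine ⟨e, a, b, c, f, d, hes, has, hbs, hc, hfs, hds,
    fun h => hae h.symm, fun h => hbe h.symm, hec, fun h => hfe h.symm, hed,
    fun h => hba h.symm, hac, haf, had,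
    hbc, hbf, hbd, fun h => hfc h.symm, fun h => hdc h.symm, hfd, ?_⟩
  intro hD
  have hfact : (b - a) * (L * (b + a) + B) = 0 := by
    rw [hL, hB]; linear_combination hD
  rcases mul_eq_zero.mp hfact with h | h
  · exact hba (sub_eq_zero.mp h)
  · apply hbb0
    have hBL : B / L = -(b + a) := by
      rw [div_eq_iff hLne]; linear_combination h
    rw [hb₀, hBL]; ring

private lemma build {F : Type*} [Field F] [Fintype F] :
    ∀ k : ℕ, 6 * k + 1 ≤ Fintype.card F →
    ∃ g : ℕ → F, Set.InjOn g (Set.Iio (6 * k)) ∧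
      ∀ i < k,
        (g (6*i+1) - g (6*i+3)) * (g (6*i+1) - g (6*i+5)) *
          ((g (6*i+2) - g (6*i)) * (g (6*i+2) - g (6*i+4))) ≠
        (g (6*i+2) - g (6*i+3)) * (g (6*i+2) - g (6*i+5)) *
          ((g (6*i+1) - g (6*i)) * (g (6*i+1) - g (6*i+4))) := by
  intro k
  induction k with
  | zero =>
    intro _
    exact ⟨fun _ => 0, by simp [Set.InjOn], by omega⟩
  | succ k ih =>
    intro hcard
    obtain ⟨g, hinj, hcond⟩ := ih (by omega)
    classical
    set s : Finset F := (Finset.range (6 * k)).image g with hsdef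
    have hscard : s.card ≤ 6 * k := by
      calc s.card ≤ (Finset.range (6 * k)).card := Finset.card_image_le
        _ = 6 * k := Finset.card_range _
    obtain ⟨e, a, b, c, f, d, hes, has, hbs, hcs, hfs, hds,
      hea, heb, hec, hef, hed, hab, hac, haf, had,
      hbc, hbf, hbd, hcf, hcd, hfd, hD⟩ := key s (by omega)
    set g' : ℕ → F := fun m =>
      if m = 6*k then e else if m = 6*k+1 then a else if m = 6*k+2 then b
      else if m = 6*k+3 then c else if m = 6*k+4 then f else if m = 6*k+5 then d
      else g m with hg'
    have hold : ∀ m, m < 6*k → g' m = g m := by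
      intro m hm
      simp only [hg']
      rw [if_neg (by omega), if_neg (by omega), if_neg (by omega),
        if_neg (by omega), if_neg (by omega), if_neg (by omega)]
    have hmem : ∀ m, m < 6*k → g' m ∈ s := by
      intro m hm
      rw [hold m hm]
      exact Finset.mem_image_of_mem g (Finset.mem_range.mpr hm)
    have hv0 : g' (6*k) = e := by simp [hg']
    have hv1 : g' (6*k+1) = a := by simp [hg']
    have hv2 : g' (6*k+2) = b := by simp [hg']
    have hv3 : g' (6*k+3) = c := by simp [hg']
    have hv4 : g' (6*k+4) = f := by simp [hg']
    have hv5 : g' (6*k+5) = d := by simp [hg']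
    have hnew : ∀ m, 6*k ≤ m → m < 6*(k+1) → g' m ∉ s := by
      intro m h1 h2
      have : m = 6*k ∨ m = 6*k+1 ∨ m = 6*k+2 ∨ m = 6*k+3 ∨ m = 6*k+4 ∨ m = 6*k+5 := by omega
      rcases this with h|h|h|h|h|h <;> subst h <;>
        simp only [hv0, hv1, hv2, hv3, hv4, hv5] <;> assumption
    refine ⟨g', ?_, ?_⟩
    · intro x hx y hy hxy
      simp only [Set.mem_Iio] at hx hy
      by_cases hx' : x < 6*k <;> by_cases hy' : y < 6*k
      · exact hinj (Set.mem_Iio.mpr hx') (Set.mem_Iio.mpr hy') (by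
          rwa [hold x hx', hold y hy'] at hxy)
      · exfalso
        exact hnew y (by omega) hy (hxy ▸ hmem x hx')
      · exfalso
        exact hnew x (by omega) hx (hxy ▸ hmem y hy')
      · have h1 : x = 6*k ∨ x = 6*k+1 ∨ x = 6*k+2 ∨ x = 6*k+3 ∨ x = 6*k+4 ∨ x = 6*k+5 := by omega
        have h2 : y = 6*k ∨ y = 6*k+1 ∨ y = 6*k+2 ∨ y = 6*k+3 ∨ y = 6*k+4 ∨ y = 6*k+5 := by omega
        rcases h1 with h|h|h|h|h|h <;> subst h <;>
          rcases h2 with h|h|h|h|h|h <;>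
          subst h <;>
          simp only [hv0, hv1, hv2, hv3, hv4, hv5] at hxy <;>
          first
            | rfl
            | exact absurd hxy (by assumption)
            | exact absurd hxy.symm (by assumption)
    · intro i hi
      by_cases hik : i < k
      · have h5 : 6*i+5 < 6*k := by omega
        rw [hold _ (by omega), hold _ (by omega), hold _ (by omega),
          hold _ (by omega), hold _ (by omega), hold _ (by omega)]
        exact hcond i hik
      · have : i = k := by omega
        subst this
        rw [hv0, hv1, hv2, hv3, hv4, hv5]
        exact hD

theorem stmt_1 (F : Type*) [Field F] [Fintype F] (n : ℕ) (hn : 3 ∣ n)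
    (hF : 2 * n + 1 ≤ Fintype.card F) :
    ∃ lam : ℕ → F, Set.InjOn lam (Set.Iio (2 * n)) ∧
      ∀ i < n / 3,
        (lam (6*i+1) - lam (6*i+3)) * (lam (6*i+1) - lam (6*i+5)) *
          ((lam (6*i+2) - lam (6*i)) * (lam (6*i+2) - lam (6*i+4))) ≠
        (lam (6*i+2) - lam (6*i+3)) * (lam (6*i+2) - lam (6*i+5)) *
          ((lam (6*i+1) - lam (6*i)) * (lam (6*i+1) - lam (6*i+4))) := by
  have h6 : 6 * (n / 3) = 2 * n := by omega
  obtain ⟨g, hinj, hcond⟩ := build (F := F) (n / 3) (by omega)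
  rw [h6] at hinj
  exact ⟨g, hinj, hcond⟩
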